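/- For 2 < r < q ≤ n, the weak Morrey space L^{q,n-q}_w(U) embeds continuously into the Morrey space L^{r,n-r}(U) on a bounded domain U ⊆ ℝⁿ; in particular L^{q,n-q}_w(U) ↪ L^{2,n-2}(U) continuously. -/

import Mathlib

open MeasureTheory Metric ENNReal NNReal

/-- The weak `L^q` quasinorm of `f` w.r.t. the measure `μ`:
`sup_{t>0} t · μ{|f| > t}^{1/q}`. -/
noncomputable def wLp {α : Type*} [MeasurableSpace α] (q : ℝ) (f : α → ℝ)
    (μ : Measure α) : ℝ≥0∞ :=
  ⨆ t : NNReal, (t : ℝ≥0∞) * (μ {x | (t : ℝ) < |f x|}) ^ (1 / q)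

/-- The Morrey norm `‖f‖_{L^{r,λ}(U)} = sup_{x ∈ U, 0 < ρ ≤ diam U} ρ^{-λ/r} ‖f‖_{L^r(B_ρ(x) ∩ U)}`. -/
noncomputable def morreyNorm {n : ℕ} (r lam : ℝ) (U : Set (Fin n → ℝ))
    (f : (Fin n → ℝ) → ℝ) : ℝ≥0∞ :=
  ⨆ (x : Fin n → ℝ) (_ : x ∈ U) (ρ : {ρ : ℝ // 0 < ρ ∧ ρ ≤ Metric.diam U}),
    ENNReal.ofReal ((ρ : ℝ) ^ (-(lam / r))) *
      eLpNorm f (ENNReal.ofReal r) (volume.restrict (Metric.ball x ρ ∩ U))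

/-- The weak Morrey norm
`‖f‖_{L^{q,λ}_w(U)} = sup_{x ∈ U, 0 < ρ ≤ diam U} ρ^{-λ/q} ‖f‖_{L^q_w(B_ρ(x) ∩ U)}`. -/
noncomputable def weakMorreyNorm {n : ℕ} (q lam : ℝ) (U : Set (Fin n → ℝ))
    (f : (Fin n → ℝ) → ℝ) : ℝ≥0∞ :=
  ⨆ (x : Fin n → ℝ) (_ : x ∈ U) (ρ : {ρ : ℝ // 0 < ρ ∧ ρ ≤ Metric.diam U}),
    ENNReal.ofReal ((ρ : ℝ) ^ (-(lam / q))) *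
      wLp q f (volume.restrict (Metric.ball x ρ ∩ U))

section Aux

variable {α : Type*} [MeasurableSpace α] {μ : Measure α} {f : α → ℝ}

lemma wLp_tail_bound {q : ℝ} (hq : 0 < q) {t : ℝ} (ht : 0 < t) :
    μ {x | t < |f x|} ≤ (wLp q f μ) ^ q * ENNReal.ofReal (t ^ (-q)) := by
  have ht' : (t.toNNReal : ℝ) = t := Real.coe_toNNReal t ht.le
  have h1 : (t.toNNReal : ℝ≥0∞) * (μ {x | (t.toNNReal : ℝ) < |f x|}) ^ (1 / q) ≤ wLp q f μ :=
    le_iSup (fun s : ℝ≥0 => (s : ℝ≥0∞) * (μ {x | (s : ℝ) < |f x|}) ^ (1 / q)) t.toNNReal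
  rw [ht'] at h1
  have htne : (t.toNNReal : ℝ≥0∞) ≠ 0 := by
    simp only [ne_eq, ENNReal.coe_eq_zero, Real.toNNReal_eq_zero, not_le]
    exact ht
  have hdiv : (μ {x | t < |f x|}) ^ (1 / q) ≤ wLp q f μ / (t.toNNReal : ℝ≥0∞) :=
    (ENNReal.le_div_iff_mul_le (Or.inl htne) (Or.inl ENNReal.coe_ne_top)).2
      (by rwa [mul_comm])
  have h2 : μ {x | t < |f x|} ≤ (wLp q f μ / (t.toNNReal : ℝ≥0∞)) ^ q := by
    calc μ {x | t < |f x|} = ((μ {x | t < |f x|}) ^ (1 / q)) ^ q := by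
          rw [← ENNReal.rpow_mul, one_div, inv_mul_cancel₀ hq.ne', ENNReal.rpow_one]
      _ ≤ _ := ENNReal.rpow_le_rpow hdiv hq.le
  refine h2.trans (le_of_eq ?_)
  have hcoe : (t.toNNReal : ℝ≥0∞) = ENNReal.ofReal t := rfl
  rw [ENNReal.div_rpow_of_nonneg _ _ hq.le, div_eq_mul_inv, hcoe,
    ENNReal.ofReal_rpow_of_pos ht, ← ENNReal.ofReal_inv_of_pos (Real.rpow_pos_of_pos ht q),
    ← Real.rpow_neg ht.le]

lemma ae_zero_of_wLp_eq_zero {q : ℝ} (hq : 0 < q) (h : wLp q f μ = 0) : f =ᵐ[μ] 0 := by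
  have hnull : ∀ t : ℝ, 0 < t → μ {x | t < |f x|} = 0 := fun t ht => by
    have h2 := wLp_tail_bound (f := f) (μ := μ) hq ht
    rw [h, ENNReal.zero_rpow_of_pos hq, zero_mul] at h2
    exact le_antisymm h2 zero_le
  have hz : μ {x | f x ≠ 0} = 0 := by
    have hset : {x | f x ≠ 0} = ⋃ k : ℕ, {x | (1 / (k + 1) : ℝ) < |f x|} := by
      ext x
      simp only [Set.mem_setOf_eq, Set.mem_iUnion]
      constructor
      · intro hx
        exact exists_nat_one_div_lt (abs_pos.2 hx)
      · rintro ⟨k, hk⟩ h0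
        rw [h0, abs_zero] at hk
        have : (0:ℝ) < 1 / (k + 1) := by positivity
        linarith
    rw [hset]
    exact measure_iUnion_null fun k => hnull _ (by positivity)
  exact ae_iff.2 hz

lemma lint_rpow_le {q s : ℝ} (hs : 1 ≤ s) (hsq : s < q) (hf : Measurable f)
    {T : ℝ} (hT : 0 < T) :
    ∫⁻ x, ENNReal.ofReal (|f x| ^ s) ∂μ ≤
      ENNReal.ofReal s * (μ Set.univ * ENNReal.ofReal (T ^ s) +
        (wLp q f μ) ^ q * ENNReal.ofReal (T ^ (s - q) / (q - s))) := by
  have hs0 : (0:ℝ) < s := one_pos.trans_le hs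
  rw [MeasureTheory.lintegral_rpow_eq_lintegral_meas_lt_mul μ
    (Filter.Eventually.of_forall fun x => abs_nonneg (f x)) hf.abs.aemeasurable hs0]
  refine mul_le_mul_right ?_ _
  rw [← Set.Ioc_union_Ioi_eq_Ioi hT.le,
    lintegral_union measurableSet_Ioi (Set.Ioc_disjoint_Ioi le_rfl)]
  refine add_le_add ?_ ?_
  · calc ∫⁻ t in Set.Ioc 0 T, μ {a | t < |f a|} * ENNReal.ofReal (t ^ (s - 1))
        ≤ ∫⁻ _ in Set.Ioc 0 T, μ Set.univ * ENNReal.ofReal (T ^ (s - 1)) := by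
          refine setLIntegral_mono measurable_const fun t ht => ?_
          exact mul_le_mul' (measure_mono (Set.subset_univ _))
            (ENNReal.ofReal_le_ofReal (Real.rpow_le_rpow ht.1.le ht.2 (by linarith)))
      _ = μ Set.univ * ENNReal.ofReal (T ^ (s - 1)) * ENNReal.ofReal T := by
          rw [setLIntegral_const, Real.volume_Ioc, sub_zero]
      _ = μ Set.univ * ENNReal.ofReal (T ^ s) := by
          rw [mul_assoc, ← ENNReal.ofReal_mul (Real.rpow_nonneg hT.le _)]
          congr 2
          rw [← Real.rpow_add_one hT.ne' (s - 1), sub_add_cancel]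
  · have hmeas : Measurable fun t : ℝ => ENNReal.ofReal (t ^ (s - 1 - q)) :=
      (measurable_id.pow measurable_const).ennreal_ofReal
    calc ∫⁻ t in Set.Ioi T, μ {a | t < |f a|} * ENNReal.ofReal (t ^ (s - 1))
        ≤ ∫⁻ t in Set.Ioi T, (wLp q f μ) ^ q * ENNReal.ofReal (t ^ (s - 1 - q)) := by
          refine setLIntegral_mono (measurable_const.mul hmeas) fun t ht => ?_
          have ht0 : (0:ℝ) < t := hT.trans ht
          calc μ {a | t < |f a|} * ENNReal.ofReal (t ^ (s - 1))
              ≤ ((wLp q f μ) ^ q * ENNReal.ofReal (t ^ (-q))) * ENNReal.ofReal (t ^ (s - 1)) :=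
                mul_le_mul_left (wLp_tail_bound (hs0.trans hsq) ht0) _
            _ = (wLp q f μ) ^ q * ENNReal.ofReal (t ^ (s - 1 - q)) := by
                rw [mul_assoc, ← ENNReal.ofReal_mul (Real.rpow_nonneg ht0.le _),
                  ← Real.rpow_add ht0]
                ring_nf
      _ = (wLp q f μ) ^ q * ∫⁻ t in Set.Ioi T, ENNReal.ofReal (t ^ (s - 1 - q)) :=
          lintegral_const_mul _ hmeas
      _ ≤ (wLp q f μ) ^ q * ENNReal.ofReal (T ^ (s - q) / (q - s)) := by
          refine mul_le_mul_right (le_of_eq ?_) _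
          rw [← MeasureTheory.ofReal_integral_eq_lintegral_ofReal
            (integrableOn_Ioi_rpow_of_lt (by linarith) hT)
            ((ae_restrict_iff' measurableSet_Ioi).2 (Filter.Eventually.of_forall
              fun t ht => Real.rpow_nonneg (hT.le.trans (le_of_lt ht)) _)),
            integral_Ioi_rpow_of_lt (by linarith) hT]
          congr 1
          have he : s - 1 - q + 1 = s - q := by ring
          rw [he]
          have h1 : q - s ≠ 0 := by linarith
          have h2 : s - q ≠ 0 := by linarith
          field_simp
          ring

end Aux

lemma morrey_embed (n : ℕ) (q s : ℝ) (hs : 1 ≤ s) (hsq : s < q) (U : Set (Fin n → ℝ)) :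
    ∃ C : ℝ, 0 < C ∧ ∀ f : (Fin n → ℝ) → ℝ, Measurable f →
      morreyNorm s (n - s) U f ≤ ENNReal.ofReal C * weakMorreyNorm q (n - q) U f := by
  have hs0 : (0:ℝ) < s := one_pos.trans_le hs
  have hq0 : (0:ℝ) < q := hs0.trans hsq
  have hqs : (0:ℝ) < q - s := by linarith
  set C0 : ℝ := s * ((2:ℝ) ^ n + 1 / (q - s)) with hC0
  have hC0pos : 0 < C0 := by positivity
  refine ⟨C0 ^ (1/s), Real.rpow_pos_of_pos hC0pos _, fun f hf => ?_⟩
  set M := weakMorreyNorm q (n - q) U f with hM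
  have key : ∀ x ∈ U, ∀ ρ : {ρ : ℝ // 0 < ρ ∧ ρ ≤ Metric.diam U},
      ENNReal.ofReal ((ρ:ℝ) ^ (-((n - q)/q))) *
        wLp q f (volume.restrict (Metric.ball x ρ ∩ U)) ≤ M := by
    intro x hx ρ
    exact le_iSup_of_le x (le_iSup_of_le hx (le_iSup
      (fun ρ' : {ρ : ℝ // 0 < ρ ∧ ρ ≤ Metric.diam U} =>
        ENNReal.ofReal ((ρ':ℝ) ^ (-((n - q)/q))) *
          wLp q f (volume.restrict (Metric.ball x ρ' ∩ U))) ρ))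
  rcases eq_or_ne M 0 with hM0 | hM0
  · have hz : morreyNorm s (n - s) U f ≤ 0 := by
      rw [morreyNorm]
      refine iSup_le fun x => iSup_le fun hx => iSup_le fun ρ => ?_
      have hw : wLp q f (volume.restrict (Metric.ball x ρ ∩ U)) = 0 := by
        have h2 := key x hx ρ
        rw [hM0] at h2
        have h1 : ENNReal.ofReal ((ρ:ℝ) ^ (-((n - q)/q))) ≠ 0 :=
          (ENNReal.ofReal_pos.2 (Real.rpow_pos_of_pos ρ.2.1 _)).ne'
        rcases mul_eq_zero.1 (le_antisymm h2 zero_le) with h | h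
        · exact absurd h h1
        · exact h
      have hfz : f =ᵐ[volume.restrict (Metric.ball x ρ ∩ U)] 0 :=
        ae_zero_of_wLp_eq_zero hq0 hw
      rw [eLpNorm_congr_ae hfz, eLpNorm_zero, mul_zero]
    exact hz.trans zero_le
  rcases eq_or_ne M ⊤ with hMtop | hMtop
  · rw [hMtop, ENNReal.mul_top
      (by simp [ENNReal.ofReal_eq_zero, not_le, Real.rpow_pos_of_pos hC0pos])]
    exact le_top
  set Mr := M.toReal with hMrdef
  have hMrpos : 0 < Mr := ENNReal.toReal_pos hM0 hMtop
  have hMeq : M = ENNReal.ofReal Mr := (ENNReal.ofReal_toReal hMtop).symm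
  rw [morreyNorm]
  refine iSup_le fun x => iSup_le fun hx => iSup_le fun ρ => ?_
  have hρ0 : (0:ℝ) < (ρ:ℝ) := ρ.2.1
  set ν := volume.restrict (Metric.ball x (ρ:ℝ) ∩ U) with hν
  set W := wLp q f ν with hWdef
  have hWle : W ≤ ENNReal.ofReal ((ρ:ℝ) ^ ((n - q)/q)) * M := by
    have h2 : ENNReal.ofReal ((ρ:ℝ) ^ ((n - q)/q)) *
        (ENNReal.ofReal ((ρ:ℝ) ^ (-((n - q)/q))) * W) = W := by
      rw [← mul_assoc, ← ENNReal.ofReal_mul (Real.rpow_nonneg hρ0.le _),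
        ← Real.rpow_add hρ0]
      simp
    calc W = _ := h2.symm
      _ ≤ _ := mul_le_mul_right (key x hx ρ) _
  have hνuniv : ν Set.univ ≤ ENNReal.ofReal ((2 * (ρ:ℝ)) ^ n) := by
    rw [hν, Measure.restrict_apply MeasurableSet.univ, Set.univ_inter]
    calc volume (Metric.ball x (ρ:ℝ) ∩ U) ≤ volume (Metric.ball x (ρ:ℝ)) :=
          measure_mono Set.inter_subset_left
      _ = ENNReal.ofReal ((2 * (ρ:ℝ)) ^ n) := by
          rw [Real.volume_pi_ball x hρ0, Fintype.card_fin]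
  set T := Mr / (ρ:ℝ) with hTdef
  have hTpos : 0 < T := div_pos hMrpos hρ0
  have hint := lint_rpow_le (μ := ν) (f := f) hs hsq hf hTpos
  have hWq : W ^ q ≤ ENNReal.ofReal ((ρ:ℝ) ^ ((n:ℝ) - q) * Mr ^ q) := by
    calc W ^ q ≤ (ENNReal.ofReal ((ρ:ℝ) ^ (((n:ℝ) - q)/q)) * M) ^ q :=
          ENNReal.rpow_le_rpow hWle hq0.le
      _ = ENNReal.ofReal ((ρ:ℝ) ^ (((n:ℝ) - q)/q) * Mr) ^ q := by
          rw [hMeq, ← ENNReal.ofReal_mul (Real.rpow_nonneg hρ0.le _)]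
      _ = ENNReal.ofReal (((ρ:ℝ) ^ (((n:ℝ) - q)/q) * Mr) ^ q) :=
          ENNReal.ofReal_rpow_of_pos (by positivity)
      _ = ENNReal.ofReal ((ρ:ℝ) ^ ((n:ℝ) - q) * Mr ^ q) := by
          congr 1
          rw [Real.mul_rpow (Real.rpow_nonneg hρ0.le _) hMrpos.le,
            ← Real.rpow_mul hρ0.le, div_mul_cancel₀ _ hq0.ne']
  have hbound : ∫⁻ a, ENNReal.ofReal (|f a| ^ s) ∂ν ≤
      ENNReal.ofReal (C0 * ((ρ:ℝ) ^ ((n:ℝ) - s) * Mr ^ s)) := by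
    refine hint.trans ?_
    calc ENNReal.ofReal s * (ν Set.univ * ENNReal.ofReal (T ^ s) +
          W ^ q * ENNReal.ofReal (T ^ (s - q) / (q - s)))
        ≤ ENNReal.ofReal s * (ENNReal.ofReal ((2 * (ρ:ℝ)) ^ n) * ENNReal.ofReal (T ^ s) +
          ENNReal.ofReal ((ρ:ℝ) ^ ((n:ℝ) - q) * Mr ^ q) *
            ENNReal.ofReal (T ^ (s - q) / (q - s))) :=
          mul_le_mul_right (add_le_add (mul_le_mul_left hνuniv _)
            (mul_le_mul_left hWq _)) _
      _ = ENNReal.ofReal (s * ((2 * (ρ:ℝ)) ^ n * T ^ s +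
            (ρ:ℝ) ^ ((n:ℝ) - q) * Mr ^ q * (T ^ (s - q) / (q - s)))) := by
          rw [← ENNReal.ofReal_mul (by positivity), ← ENNReal.ofReal_mul (by positivity),
            ← ENNReal.ofReal_add (by positivity) (by positivity),
            ← ENNReal.ofReal_mul hs0.le]
      _ = ENNReal.ofReal (C0 * ((ρ:ℝ) ^ ((n:ℝ) - s) * Mr ^ s)) := by
          congr 1
          have h1 : ((ρ:ℝ) ^ s) ≠ 0 := (Real.rpow_pos_of_pos hρ0 s).ne'
          have h2 : ((ρ:ℝ) ^ q) ≠ 0 := (Real.rpow_pos_of_pos hρ0 q).ne'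
          have h3 : (Mr ^ q) ≠ 0 := (Real.rpow_pos_of_pos hMrpos q).ne'
          rw [hTdef, hC0, Real.div_rpow hMrpos.le hρ0.le, Real.div_rpow hMrpos.le hρ0.le,
            Real.rpow_sub hρ0, Real.rpow_sub hρ0, Real.rpow_sub hρ0,
            Real.rpow_sub hMrpos, mul_pow, Real.rpow_natCast]
          field_simp
  have hsne : (ENNReal.ofReal s) ≠ 0 := by
    simp only [ne_eq, ENNReal.ofReal_eq_zero, not_le]
    exact hs0
  have help : eLpNorm f (ENNReal.ofReal s) ν ≤
      ENNReal.ofReal (C0 ^ (1/s) * ((ρ:ℝ) ^ (((n:ℝ) - s)/s) * Mr)) := by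
    rw [eLpNorm_eq_lintegral_rpow_enorm_toReal hsne ENNReal.ofReal_ne_top,
      ENNReal.toReal_ofReal hs0.le]
    have heq : ∀ a, ‖f a‖ₑ ^ s = ENNReal.ofReal (|f a| ^ s) := fun a => by
      rw [← ofReal_norm_eq_enorm, Real.norm_eq_abs,
        ENNReal.ofReal_rpow_of_nonneg (abs_nonneg _) hs0.le]
    simp_rw [heq]
    calc (∫⁻ a, ENNReal.ofReal (|f a| ^ s) ∂ν) ^ (1/s)
        ≤ (ENNReal.ofReal (C0 * ((ρ:ℝ) ^ ((n:ℝ) - s) * Mr ^ s))) ^ (1/s) :=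
          ENNReal.rpow_le_rpow hbound (by positivity)
      _ = ENNReal.ofReal ((C0 * ((ρ:ℝ) ^ ((n:ℝ) - s) * Mr ^ s)) ^ (1/s)) :=
          ENNReal.ofReal_rpow_of_pos (by positivity)
      _ = ENNReal.ofReal (C0 ^ (1/s) * ((ρ:ℝ) ^ (((n:ℝ) - s)/s) * Mr)) := by
          congr 1
          rw [Real.mul_rpow hC0pos.le (by positivity),
            Real.mul_rpow (Real.rpow_nonneg hρ0.le _) (Real.rpow_nonneg hMrpos.le _),
            ← Real.rpow_mul hρ0.le, ← Real.rpow_mul hMrpos.le,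
            mul_one_div, mul_one_div, div_self hs0.ne', Real.rpow_one]
  calc ENNReal.ofReal ((ρ:ℝ) ^ (-((n - s)/s))) * eLpNorm f (ENNReal.ofReal s) ν
      ≤ ENNReal.ofReal ((ρ:ℝ) ^ (-(((n:ℝ) - s)/s))) *
        ENNReal.ofReal (C0 ^ (1/s) * ((ρ:ℝ) ^ (((n:ℝ) - s)/s) * Mr)) :=
        mul_le_mul_right help _
    _ = ENNReal.ofReal (C0 ^ (1/s) * Mr) := by
        rw [← ENNReal.ofReal_mul (Real.rpow_nonneg hρ0.le _)]
        congr 1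
        have h1 : (ρ:ℝ) ^ (-(((n:ℝ) - s)/s)) * (ρ:ℝ) ^ (((n:ℝ) - s)/s) = 1 := by
          rw [← Real.rpow_add hρ0]; simp
        linear_combination (C0 ^ (1/s) * Mr) * h1
    _ = ENNReal.ofReal (C0 ^ (1/s)) * M := by
        rw [ENNReal.ofReal_mul (Real.rpow_nonneg hC0pos.le _), hMeq]


/-- **Weak Morrey spaces embed into Morrey spaces.**  For `2 < r < q ≤ n`, the weak
Morrey space `L^{q,n-q}_w(U)` embeds continuously into the Morrey space `L^{r,n-r}(U)`
on a bounded domain `U ⊆ ℝⁿ`; in particular `L^{q,n-q}_w(U) ↪ L^{2,n-2}(U)`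
continuously. -/
theorem stmt_7 (n : ℕ) (q r : ℝ) (hr : 2 < r) (hrq : r < q) (hqn : q ≤ n)
    (U : Set (Fin n → ℝ)) (hUopen : IsOpen U) (hUbdd : Bornology.IsBounded U) :
    (∃ C : ℝ, 0 < C ∧ ∀ f : (Fin n → ℝ) → ℝ, Measurable f →
      morreyNorm r (n - r) U f ≤ ENNReal.ofReal C * weakMorreyNorm q (n - q) U f) ∧
    (∃ C : ℝ, 0 < C ∧ ∀ f : (Fin n → ℝ) → ℝ, Measurable f →
      morreyNorm 2 (n - 2) U f ≤ ENNReal.ofReal C * weakMorreyNorm q (n - q) U f) := by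
  constructor
  · exact morrey_embed n q r (by linarith) hrq U
  · exact morrey_embed n q 2 one_le_two (by linarith) U
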